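/- Let α and β be irrational real numbers such that β = (aα + b)/(cα + d) for some matrix [[a,b],[c,d]] ∈ GL(2,ℤ) with determinant ±1. Then the continued fraction expansions of α and β have the same tail: there exist N, M such that the (N+i)-th partial quotient of α equals the (M+i)-th partial quotient of β for all i ≥ 1. -/

import Mathlib

/-- `a` is the continued fraction expansion of `α` (via the Gauss map):
`a n = ⌊x n⌋` where `x 0 = α` and `x (n+1) = 1/(x n - ⌊x n⌋)`. -/
def IsCFOf (α : ℝ) (a : ℕ → ℤ) : Prop :=
  ∃ x : ℕ → ℝ, x 0 = α ∧ (∀ n, a n = ⌊x n⌋) ∧ ∀ n, x (n + 1) = 1 / (x n - ⌊x n⌋)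

/-- `p n`, `q n` are the convergent numerators/denominators of the continued
fraction with partial quotients `a`, shifted by one: `p (n+1)/q (n+1)` is the
`n`-th convergent `pₙ/qₙ`, and `p 0 = p₋₁ = 1`, `q 0 = q₋₁ = 0`. -/
def IsConvergentsOf (a : ℕ → ℤ) (p q : ℕ → ℤ) : Prop :=
  p 0 = 1 ∧ p 1 = a 0 ∧ (∀ n, p (n + 2) = a (n + 1) * p (n + 1) + p n) ∧
  q 0 = 0 ∧ q 1 = 1 ∧ (∀ n, q (n + 2) = a (n + 1) * q (n + 1) + q n)

/-- if `β = (aα + b)/(cα + d)` with `ad − bc = ±1` (integer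
entries), then the continued fraction expansions of the irrational numbers
`α` and `β` have the same tail. -/

noncomputable def gaussMap (x : ℝ) : ℝ := 1 / (x - ⌊x⌋)

def mmul : (ℤ×ℤ×ℤ×ℤ) → (ℤ×ℤ×ℤ×ℤ) → (ℤ×ℤ×ℤ×ℤ) :=
  fun m m' => (m.1 * m'.1 + m.2.1 * m'.2.2.1, m.1 * m'.2.1 + m.2.1 * m'.2.2.2,
    m.2.2.1 * m'.1 + m.2.2.2 * m'.2.2.1, m.2.2.1 * m'.2.1 + m.2.2.2 * m'.2.2.2)

def mOf (e : ℤ) : ℤ×ℤ×ℤ×ℤ := (e, 1, 1, 0)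

def matL : List ℤ → ℤ×ℤ×ℤ×ℤ
  | [] => (1, 0, 0, 1)
  | e :: l => mmul (mOf e) (matL l)

lemma mmul_assoc (m₁ m₂ m₃ : ℤ×ℤ×ℤ×ℤ) : mmul (mmul m₁ m₂) m₃ = mmul m₁ (mmul m₂ m₃) := by
  obtain ⟨a,b,c,d⟩ := m₁; obtain ⟨e,f,g,h⟩ := m₂; obtain ⟨i,j,k,l⟩ := m₃
  simp only [mmul, Prod.mk.injEq]; refine ⟨by ring, by ring, by ring, by ring⟩

lemma matL_append (l : List ℤ) (e : ℤ) :
    matL (l ++ [e]) = mmul (matL l) (mOf e) := by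
  induction l with
  | nil =>
    simp only [List.nil_append, matL, mmul, mOf, Prod.mk.injEq]
    refine ⟨by ring, by ring, by ring, by ring⟩
  | cons x l ih =>
    show mmul (mOf x) (matL (l ++ [e])) = _
    rw [ih, ← mmul_assoc]
    rfl

noncomputable def cfv : List ℤ → ℝ → ℝ
  | [], t => t
  | e :: l, t => e + 1 / cfv l t

lemma cfv_gt_one (t : ℝ) (ht : 1 < t) : ∀ l : List ℤ, (∀ e ∈ l, 1 ≤ e) → 1 < cfv l t := by
  intro l
  induction l with
  | nil => intro _; simpa [cfv] using ht
  | cons e l ih =>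
    intro h
    have h1 : 1 < cfv l t := ih (fun x hx => h x (List.mem_cons_of_mem _ hx))
    have he : (1:ℝ) ≤ e := by exact_mod_cast h e List.mem_cons_self
    have : 0 < 1 / cfv l t := by positivity
    simp only [cfv]
    nlinarith

lemma cfv_eq (t : ℝ) (ht : 1 < t) : ∀ l : List ℤ, (∀ e ∈ l, 1 ≤ e) →
    0 < ((matL l).2.2.1 : ℝ) * t + ((matL l).2.2.2 : ℝ) ∧
    cfv l t = (((matL l).1 : ℝ) * t + ((matL l).2.1 : ℝ)) /
      (((matL l).2.2.1 : ℝ) * t + ((matL l).2.2.2 : ℝ)) := by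
  intro l
  induction l with
  | nil => intro _; simp [matL, cfv]
  | cons e l ih =>
    intro h
    obtain ⟨hden, hval⟩ := ih (fun x hx => h x (List.mem_cons_of_mem _ hx))
    have h1 : 1 < cfv l t := cfv_gt_one t ht l (fun x hx => h x (List.mem_cons_of_mem _ hx))
    set A := (matL l).1 with hA
    set B := (matL l).2.1 with hB
    set C := (matL l).2.2.1 with hC
    set D := (matL l).2.2.2 with hD
    have hmat : matL (e :: l) = (e * A + C, e * B + D, A, B) := by
      show mmul (mOf e) (matL l) = _
      simp only [mmul, mOf, Prod.mk.injEq]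
      refine ⟨by ring, by ring, by ring, by ring⟩
    have hnum : 0 < (A : ℝ) * t + B := by
      have := hval ▸ h1
      have : ((C:ℝ) * t + D) < (A:ℝ) * t + B := by
        rw [hval] at h1
        calc ((C:ℝ) * t + D) = 1 * ((C:ℝ) * t + D) := by ring
        _ < (((A:ℝ) * t + B) / ((C:ℝ) * t + D)) * ((C:ℝ) * t + D) := by
            exact mul_lt_mul_of_pos_right h1 hden
        _ = (A:ℝ) * t + B := div_mul_cancel₀ _ hden.ne'
      linarith
    rw [hmat]
    constructor
    · exact hnum
    · have hne : (A:ℝ) * t + B ≠ 0 := ne_of_gt hnum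
      have hcfvne : cfv l t ≠ 0 := by linarith
      show (e:ℝ) + 1 / cfv l t = _
      rw [hval]
      push_cast
      rw [one_div_div]
      rw [eq_div_iff hne, add_mul, div_mul_cancel₀ _ hne]
      ring

lemma floor_int_add_inv (e : ℤ) (r : ℝ) (hr : 1 < r) : ⌊(e : ℝ) + 1 / r⌋ = e := by
  have h0 : 0 < 1 / r := by positivity
  have h1 : 1 / r < 1 := by
    rw [div_lt_one (by linarith)]; linarith
  rw [add_comm, Int.floor_add_intCast]
  have : ⌊(1:ℝ) / r⌋ = 0 := Int.floor_eq_zero_iff.mpr ⟨le_of_lt h0, h1⟩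
  omega

lemma gauss_orbit (t : ℝ) (ht : 1 < t) : ∀ l : List ℤ, (∀ e ∈ l, 1 ≤ e) → ∀ e0 : ℤ,
    gaussMap^[l.length + 1] (cfv (e0 :: l) t) = t := by
  intro l
  induction l with
  | nil =>
    intro _ e0
    have ht0 : t ≠ 0 := by linarith
    simp only [List.length_nil, Nat.zero_add, Function.iterate_one, cfv, gaussMap]
    rw [floor_int_add_inv e0 t ht]
    push_cast
    field_simp
    ring
  | cons e l ih =>
    intro h e0
    have hl : ∀ x ∈ l, (1:ℤ) ≤ x := fun x hx => h x (List.mem_cons_of_mem _ hx)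
    have h1 : 1 < cfv (e :: l) t := cfv_gt_one t ht (e :: l) h
    have hstep : gaussMap (cfv (e0 :: e :: l) t) = cfv (e :: l) t := by
      show gaussMap ((e0 : ℝ) + 1 / cfv (e :: l) t) = _
      unfold gaussMap
      rw [floor_int_add_inv e0 _ h1]
      have : (e0:ℝ) + 1 / cfv (e :: l) t - e0 = 1 / cfv (e :: l) t := by ring
      rw [this, one_div_one_div]
    have hlen : (e :: l).length + 1 = l.length + 1 + 1 := rfl
    rw [hlen, Function.iterate_succ_apply, hstep]
    exact ih hl e

lemma dec (Dn : ℕ) : ∀ A B C D : ℤ, D.toNat = Dn → D < C → 1 ≤ D →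
    (A * D - B * C = 1 ∨ A * D - B * C = -1) →
    ∃ e0 : ℤ, ∃ l : List ℤ, (∀ e ∈ l, 1 ≤ e) ∧ matL (e0 :: l) = (A, B, C, D) := by
  induction Dn using Nat.strong_induction_on with
  | _ Dn ih =>
  intro A B C D hDn hDC hD hdet
  rcases eq_or_lt_of_le hD with h1 | h2
  · -- D = 1
    subst h1
    rcases hdet with h | h
    · refine ⟨B, [C], ?_, ?_⟩
      · intro x hx; simp at hx; omega
      · simp only [matL, mmul, mOf, Prod.mk.injEq]
        refine ⟨by ring_nf; ring_nf at h; linarith, by ring, by ring, by ring⟩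
    · refine ⟨B - 1, [1, C - 1], ?_, ?_⟩
      · intro x hx; simp at hx; rcases hx with h' | h' <;> omega
      · simp only [matL, mmul, mOf, Prod.mk.injEq]
        refine ⟨by ring_nf; ring_nf at h; linarith, by ring, by ring, by ring⟩
  · -- 2 ≤ D
    have hDpos : (0:ℤ) < D := by omega
    set e := C / D with he
    set r := C % D with hr
    have hr0 : 0 ≤ r := Int.emod_nonneg C (by omega)
    have hrD : r < D := Int.emod_lt_of_pos C hDpos
    have hCe : C = D * e + r := (Int.mul_ediv_add_emod C D).symm
    have hr1 : 1 ≤ r := by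
      by_contra hcon
      have hre : r = 0 := by omega
      have hdvd : D ∣ C := ⟨e, by omega⟩
      have hdvd2 : D ∣ A * D - B * C := by
        exact dvd_sub (Dvd.intro_left A rfl) ((hdvd.mul_left B))
      have : D ∣ 1 := by
        rcases hdet with h | h
        · rwa [h] at hdvd2
        · rw [h] at hdvd2; exact (dvd_neg.mp hdvd2)
      have := Int.le_of_dvd one_pos this
      omega
    have hdet' : B * r - (A - e * B) * D = 1 ∨ B * r - (A - e * B) * D = -1 := by
      have hkey : B * r - (A - e * B) * D = -(A * D - B * C) := by rw [hCe]; ring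
      rcases hdet with h | h
      · right; rw [hkey, h]
      · left; rw [hkey, h]; ring
    obtain ⟨e0, l', hl', hm'⟩ := ih r.toNat (by omega) B (A - e * B) D r rfl hrD hr1 hdet'
    have he1 : 1 ≤ e := by
      rw [he, Int.le_ediv_iff_mul_le hDpos]; omega
    refine ⟨e0, l' ++ [e], ?_, ?_⟩
    · intro x hx
      rcases List.mem_append.mp hx with h' | h'
      · exact hl' x h'
      · simp at h'; omega
    · have hsplit : e0 :: (l' ++ [e]) = (e0 :: l') ++ [e] := rfl
      rw [hsplit, matL_append, hm']
      simp only [mmul, mOf, Prod.mk.injEq]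
      refine ⟨by ring, by ring, by rw [hCe]; ring, by ring⟩

def pAux (a : ℕ → ℤ) : ℕ → ℤ × ℤ
  | 0 => (1, a 0)
  | n+1 => ((pAux a n).2, a (n+1) * (pAux a n).2 + (pAux a n).1)

def qAux (a : ℕ → ℤ) : ℕ → ℤ × ℤ
  | 0 => (0, 1)
  | n+1 => ((qAux a n).2, a (n+1) * (qAux a n).2 + (qAux a n).1)

theorem stmt17 (α β : ℝ) (hα : Irrational α) (hβ : Irrational β)
    (a b c d : ℤ) (hdet : a * d - b * c = 1 ∨ a * d - b * c = -1)
    (hβα : β = ((a : ℝ) * α + (b : ℝ)) / ((c : ℝ) * α + (d : ℝ)))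
    (aα aβ : ℕ → ℤ) (hcfα : IsCFOf α aα) (hcfβ : IsCFOf β aβ) :
    ∃ N M : ℕ, ∀ i, 1 ≤ i → aα (N + i) = aβ (M + i) := by
  obtain ⟨x, hx0, hax, hxrec⟩ := hcfα
  obtain ⟨y, hy0, hay, hyrec⟩ := hcfβ
  -- irrationality of the orbit
  have hxirr : ∀ n, Irrational (x n) := by
    intro n
    induction n with
    | zero => rwa [hx0]
    | succ n ihn =>
      rw [hxrec n, one_div]
      exact (Irrational.sub_intCast ihn ⌊x n⌋).inv
  have hfr : ∀ n, 0 < x n - ⌊x n⌋ ∧ x n - ⌊x n⌋ < 1 := by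
    intro n
    have h1 : (⌊x n⌋ : ℝ) ≤ x n := Int.floor_le _
    have h2 : x n < ⌊x n⌋ + 1 := Int.lt_floor_add_one _
    have hne : x n ≠ (⌊x n⌋ : ℝ) := (hxirr n).ne_int _
    exact ⟨sub_pos.mpr (lt_of_le_of_ne h1 (Ne.symm hne)), by linarith⟩
  have hxgt : ∀ n, 1 < x (n + 1) := by
    intro n
    rw [hxrec n, lt_div_iff₀ (hfr n).1]
    linarith [(hfr n).2]
  have ha1 : ∀ n, 1 ≤ aα (n + 1) := by
    intro n
    rw [hax]
    exact Int.le_floor.mpr (by exact_mod_cast (hxgt n).le)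
  -- convergents
  set p : ℕ → ℤ := fun n => (pAux aα n).1 with hpdef
  set q : ℕ → ℤ := fun n => (qAux aα n).1 with hqdef
  have hp0 : p 0 = 1 := rfl
  have hp1 : p 1 = aα 0 := rfl
  have hprec : ∀ n, p (n + 2) = aα (n + 1) * p (n + 1) + p n := fun n => rfl
  have hq0 : q 0 = 0 := rfl
  have hq1 : q 1 = 1 := rfl
  have hqrec : ∀ n, q (n + 2) = aα (n + 1) * q (n + 1) + q n := fun n => rfl
  have hq_pair : ∀ n, 0 ≤ q n ∧ 0 ≤ q (n + 1) := by
    intro n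
    induction n with
    | zero => exact ⟨le_refl 0, by rw [hq1]; norm_num⟩
    | succ n ihn =>
      refine ⟨ihn.2, ?_⟩
      rw [hqrec n]
      nlinarith [ha1 n, ihn.1, ihn.2]
  have hq_one : ∀ n, 1 ≤ q (n + 1) := by
    intro n
    induction n with
    | zero => rw [hq1]
    | succ n ihn =>
      rw [hqrec n]
      nlinarith [ha1 n, (hq_pair n).1]
  have hq_add : ∀ n, q (n + 1) + q n ≤ q (n + 2) := by
    intro n
    rw [hqrec n]
    nlinarith [ha1 n, hq_one n]
  have hq_mono : ∀ n, q (n + 1) ≤ q (n + 2) := by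
    intro n
    have := hq_add n
    have := (hq_pair n).1
    omega
  have hq_grow : ∀ n : ℕ, (n : ℤ) ≤ q (n + 1) := by
    intro n
    induction n with
    | zero => simp [hq1]
    | succ n ihn =>
      have := hq_add n
      rcases Nat.eq_zero_or_pos n with h | h
      · subst h
        simpa using hq_one 1
      · have h1 : 1 ≤ q n := by
          obtain ⟨m, rfl⟩ := Nat.exists_eq_add_of_lt h
          simpa using hq_one m
        show ((n+1 : ℕ) : ℤ) ≤ q (n + 2)
        push_cast
        omega
  -- key identity
  have key : ∀ n, (p (n+1) : ℝ) * x (n+1) + (p n : ℝ) = α * ((q (n+1) : ℝ) * x (n+1) + (q n : ℝ)) := by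
    intro n
    induction n with
    | zero =>
      have hfr0 := hfr 0
      have hx1 : x 1 * (x 0 - (⌊x 0⌋ : ℝ)) = 1 := by
        rw [hxrec 0]
        exact one_div_mul_cancel (ne_of_gt hfr0.1)
      rw [hp1, hq1, hq0, hp0, hax 0, ← hx0]
      push_cast
      linear_combination -hx1
    | succ n ihn =>
      have hfr1 := hfr (n+1)
      have hrelmul : x (n+2) * (x (n+1) - (aα (n+1) : ℝ)) = 1 := by
        rw [hax (n+1), hxrec (n+1)]
        exact one_div_mul_cancel (ne_of_gt hfr1.1)
      rw [hprec n, hqrec n]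
      push_cast
      linear_combination x (n+2) * ihn - ((p (n+1) : ℝ) - α * (q (n+1) : ℝ)) * hrelmul
  -- determinant of consecutive convergents
  have hdetpq : ∀ n, p (n+1) * q n - p n * q (n+1) = 1 ∨ p (n+1) * q n - p n * q (n+1) = -1 := by
    intro n
    induction n with
    | zero => right; rw [hp0, hp1, hq0, hq1]; ring
    | succ n ihn =>
      have hflip : p (n+2) * q (n+1) - p (n+1) * q (n+2) = -(p (n+1) * q n - p n * q (n+1)) := by
        rw [hprec n, hqrec n]; ring
      rcases ihn with h | h
      · right; rw [hflip, h]
      · left; rw [hflip, h]; ring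
  -- error terms
  set E : ℕ → ℝ := fun n => (p n : ℝ) - α * q n with hEdef
  have hErec : ∀ n, x (n+1) * E (n+1) = - E n := by
    intro n
    simp only [hEdef]
    linear_combination key n
  have hEbound : ∀ n, |E n| ≤ 1 := by
    intro n
    induction n with
    | zero =>
      simp only [hEdef, hp0, hq0]
      norm_num
    | succ n ihn =>
      have hx := hxgt n
      have hxne : x (n+1) ≠ 0 := by linarith
      have hEeq : E (n+1) = - E n / x (n+1) := by
        rw [eq_div_iff hxne]
        linarith [hErec n]
      rw [hEeq, abs_div, abs_neg, abs_of_pos (by linarith : (0:ℝ) < x (n+1))]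
      calc |E n| / x (n+1) ≤ |E n| := div_le_self (abs_nonneg _) (by linarith)
      _ ≤ 1 := ihn
    -- WLOG denominator positive
  have hs0 : (c : ℝ) * α + d ≠ 0 := by
    intro h0
    rcases eq_or_ne c 0 with hc | hc
    · subst hc
      have hd : (d : ℝ) = 0 := by simpa using h0
      have : d = 0 := by exact_mod_cast hd
      subst this
      simp at hdet
    · have hcR : (c : ℝ) ≠ 0 := Int.cast_ne_zero.mpr hc
      apply hα
      refine ⟨(-d : ℚ) / (c : ℚ), ?_⟩
      push_cast
      field_simp
      linarith
  obtain ⟨a', b', c', d', hdet2, hβα2, hspos⟩ :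
      ∃ A B C D : ℤ, (A * D - B * C = 1 ∨ A * D - B * C = -1) ∧
        β = ((A : ℝ) * α + B) / ((C : ℝ) * α + D) ∧ 0 < (C : ℝ) * α + D := by
    rcases lt_or_gt_of_ne hs0 with hneg | hpos
    · refine ⟨-a, -b, -c, -d, ?_, ?_, ?_⟩
      · rw [show (-a) * (-d) - (-b) * (-c) = a * d - b * c by ring]; exact hdet
      · rw [hβα]
        push_cast
        rw [show -(a:ℝ) * α + -(b:ℝ) = -((a:ℝ) * α + b) by ring,
          show -(c:ℝ) * α + -(d:ℝ) = -((c:ℝ) * α + d) by ring, neg_div_neg_eq]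
      · push_cast
        linarith
    · exact ⟨a, b, c, d, hdet, hβα, hpos⟩
  set s : ℝ := (c' : ℝ) * α + d' with hsdef
  set Cm : ℕ → ℤ := fun m => c' * p m + d' * q m with hCmdef
  have hCmval : ∀ m, (Cm m : ℝ) = (q m : ℝ) * s + (c' : ℝ) * E m := by
    intro m
    simp only [hCmdef, hEdef, hsdef]
    push_cast
    ring
  have hcE : ∀ m, -|(c' : ℝ)| ≤ (c' : ℝ) * E m ∧ (c' : ℝ) * E m ≤ |(c' : ℝ)| := by
    intro m
    have h1 : |(c' : ℝ) * E m| ≤ |(c' : ℝ)| := by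
      rw [abs_mul]
      calc |(c' : ℝ)| * |E m| ≤ |(c' : ℝ)| * 1 :=
        mul_le_mul_of_nonneg_left (hEbound m) (abs_nonneg _)
      _ = |(c' : ℝ)| := mul_one _
    exact ⟨neg_le_of_abs_le h1, le_of_abs_le h1⟩
  obtain ⟨K, hK⟩ := exists_nat_gt ((2 * |(c' : ℝ)| + 1) / s)
  have hKs : 2 * |(c' : ℝ)| + 1 < (K : ℝ) * s := by
    rw [div_lt_iff₀ hspos] at hK
    linarith
    -- choice of index
  set n : ℕ := K + 2 with hndef
  have hqK : (K : ℝ) ≤ (q (K+1) : ℝ) := by exact_mod_cast hq_grow K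
  have hsnn : (0:ℝ) ≤ s := le_of_lt hspos
  have hqn_ge : (q (K+1) : ℝ) ≤ (q n : ℝ) := by
    have := hq_mono K
    exact_mod_cast this
  have habs : (0:ℝ) ≤ |(c' : ℝ)| := abs_nonneg _
  have hD1 : 1 ≤ Cm n := by
    have h1 : (K : ℝ) * s ≤ (q n : ℝ) * s :=
      mul_le_mul_of_nonneg_right (le_trans hqK hqn_ge) hsnn
    have h2 := (hcE n).1
    have : (1 : ℝ) < (Cm n : ℝ) := by
      rw [hCmval n]
      nlinarith
    exact_mod_cast this.le
  have hCD : Cm n < Cm (n+1) := by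
    have hdq : (q (K+1) : ℝ) ≤ (q (n+1) : ℝ) - (q n : ℝ) := by
      have h := hq_add n
      have h2 : q (K+1) ≤ q (n+1) - q n := by
        show q (K+1) ≤ q (K+3) - q (K+2)
        have : q (K+2+1) = aα (K+2) * q (K+2) + q (K+1) := by
          have := hqrec (K+1)
          exact this
        nlinarith [ha1 (K+1), hq_one (K+1), (hq_pair (K+2)).1]
      exact_mod_cast h2
    have h1 : (K : ℝ) * s ≤ ((q (n+1) : ℝ) - q n) * s :=
      mul_le_mul_of_nonneg_right (le_trans hqK hdq) hsnn
    have h2 := (hcE n).2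
    have h3 := (hcE (n+1)).1
    have : (Cm n : ℝ) < (Cm (n+1) : ℝ) := by
      rw [hCmval n, hCmval (n+1)]
      nlinarith
    exact_mod_cast this
  set t : ℝ := x (n+1) with htdef
  have ht : 1 < t := hxgt n
  set A : ℤ := a' * p (n+1) + b' * q (n+1) with hAdef
  set B : ℤ := a' * p n + b' * q n with hBdef
  have hdetABCD : A * Cm n - B * Cm (n+1) = 1 ∨ A * Cm n - B * Cm (n+1) = -1 := by
    have hfactor : A * Cm n - B * Cm (n+1) =
        (a' * d' - b' * c') * (p (n+1) * q n - p n * q (n+1)) := by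
      simp only [hAdef, hBdef, hCmdef]
      ring
    rcases hdet2 with h | h <;> rcases hdetpq n with h' | h' <;>
      rw [hfactor, h, h'] <;> norm_num
  -- β in terms of t
  have hw : 0 < (q (n+1) : ℝ) * t + (q n : ℝ) := by
    have h1 : (1:ℝ) ≤ (q (n+1) : ℝ) := by exact_mod_cast hq_one n
    have h2 : (0:ℝ) ≤ (q n : ℝ) := by exact_mod_cast (hq_pair n).1
    nlinarith
  have hαw : α * ((q (n+1) : ℝ) * t + (q n : ℝ)) = (p (n+1) : ℝ) * t + (p n : ℝ) :=
    (key n).symm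
  have hCt : (Cm (n+1) : ℝ) * t + (Cm n : ℝ) = s * ((q (n+1) : ℝ) * t + (q n : ℝ)) := by
    simp only [hCmdef, hsdef]
    push_cast
    linear_combination (-(c' : ℝ)) * hαw
  have hAt : (A : ℝ) * t + (B : ℝ) = ((a' : ℝ) * α + (b' : ℝ)) * ((q (n+1) : ℝ) * t + (q n : ℝ)) := by
    simp only [hAdef, hBdef]
    push_cast
    linear_combination (-(a' : ℝ)) * hαw
  have hCtpos : 0 < (Cm (n+1) : ℝ) * t + (Cm n : ℝ) := by
    rw [hCt]
    exact mul_pos hspos hw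
  have hβt : β = ((A : ℝ) * t + (B : ℝ)) / ((Cm (n+1) : ℝ) * t + (Cm n : ℝ)) := by
    rw [hβα2, div_eq_div_iff hspos.ne' hCtpos.ne', hCt, hAt]
    ring
    -- decompose the matrix
  obtain ⟨e0, l, hl, hmat⟩ := dec (Cm n).toNat A B (Cm (n+1)) (Cm n) rfl hCD hD1 hdetABCD
  -- identify the components of matL l
  have hcomp : e0 * (matL l).1 + 1 * (matL l).2.2.1 = A ∧
      e0 * (matL l).2.1 + 1 * (matL l).2.2.2 = B ∧
      1 * (matL l).1 + 0 * (matL l).2.2.1 = Cm (n+1) ∧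
      1 * (matL l).2.1 + 0 * (matL l).2.2.2 = Cm n := by
    have h := hmat
    simp only [matL, mmul, mOf, Prod.mk.injEq] at h
    exact ⟨h.1, h.2.1, h.2.2.1, h.2.2.2⟩
  obtain ⟨hc1, hc2, hc3, hc4⟩ := hcomp
  have hM1 : (matL l).1 = Cm (n+1) := by omega
  have hM2 : (matL l).2.1 = Cm n := by omega
  rw [hM1] at hc1
  rw [hM2] at hc2
  have hA' : A = e0 * Cm (n+1) + (matL l).2.2.1 := by linarith
  have hB' : B = e0 * Cm n + (matL l).2.2.2 := by linarith
  obtain ⟨hden2, hval2⟩ := cfv_eq t ht l hl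
  rw [hM1, hM2] at hval2
  -- β equals the continued fraction value
  have hβcfv : β = cfv (e0 :: l) t := by
    show β = (e0 : ℝ) + 1 / cfv l t
    rw [hval2, one_div_div, hβt, hA', hB']
    push_cast
    field_simp
    ring
  -- orbits
  have hyiter : ∀ m, y m = gaussMap^[m] β := by
    intro m
    induction m with
    | zero => simpa using hy0
    | succ m ihm =>
      rw [Function.iterate_succ_apply', ← ihm, hyrec m]
      rfl
  have hyt : y (l.length + 1) = t := by
    rw [hyiter, hβcfv]
    exact gauss_orbit t ht l hl e0
  have hgx : ∀ m, x (m + 1) = gaussMap (x m) := fun m => hxrec m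
  have hgy : ∀ m, y (m + 1) = gaussMap (y m) := fun m => hyrec m
  have hshift : ∀ j, y (l.length + 1 + j) = x (n + 1 + j) := by
    intro j
    induction j with
    | zero => simpa using hyt
    | succ j ihj =>
      have h1 : l.length + 1 + (j + 1) = (l.length + 1 + j) + 1 := by ring
      have h2 : n + 1 + (j + 1) = (n + 1 + j) + 1 := by ring
      rw [h1, h2, hgy, hgx, ihj]
  -- conclusion
  refine ⟨n, l.length, fun i hi => ?_⟩
  obtain ⟨j, rfl⟩ : ∃ j, i = j + 1 := ⟨i - 1, by omega⟩
  rw [hax, hay]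
  have h1 : l.length + (j + 1) = l.length + 1 + j := by ring
  have h2 : n + (j + 1) = n + 1 + j := by ring
  rw [h1, h2, hshift j]
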